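/- (Abstract Aubin–Nitsche/duality L² estimate) Let V ⊆ H be Hilbert spaces, a : V × V → ℝ bilinear bounded, u ∈ V, u_h ∈ V_h ⊆ V. Suppose: (i) for every χ ∈ H there exists w_χ ∈ V solving the adjoint problem a(v, w_χ) = ⟨χ, v⟩_H for all v ∈ V, with regularity ‖w_χ‖_W ≤ C_R ‖χ‖_H in a subspace W ⊆ V; (ii) an interpolant I_h w_χ ∈ V_h satisfies ‖w_χ − I_h w_χ‖_V ≤ C_I h ‖w_χ‖_W; (iii) ‖u − u_h‖_V ≤ C₁ h; and (iv) the consistency bound |a(u_h, I_h w_χ) − F(I_h w_χ)| ≤ C₂ h² ‖w_χ‖_W, where F(v) := a(u, v). Then ‖u − u_h‖_H ≤ C h² for a constant C depending on C_R, C_I, C₁, C₂ and the boundedness constant of a. -/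

import Mathlib

open scoped RealInnerProductSpace

/-- Abstract Aubin–Nitsche / duality `L²` estimate.  In a Hilbert space `H` with
subspaces `W ≤ V` carrying (stronger) norms `nV`, `nW`, let `a` be a bilinear form that
is bounded with respect to `nV`.  There is a constant `C` (depending only on the
constants `Ca, CR, CI, C₁, C₂`) such that: for every `h > 0`, every subspace `V_h ≤ V`,
and every `u ∈ V`, `u_h ∈ V_h` with (i) solvable regular adjoint problems, (ii) an
interpolant with `nV(w_χ − I_h w_χ) ≤ CI h nW(w_χ)`, (iii) `nV(u − u_h) ≤ C₁ h`, and
(iv) the consistency bound `|a(u_h, I_h w_χ) − a(u, I_h w_χ)| ≤ C₂ h² nW(w_χ)`, one has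
`‖u − u_h‖_H ≤ C h²`. -/
theorem abstract_aubin_nitsche {H : Type*} [NormedAddCommGroup H]
    [InnerProductSpace ℝ H]
    (V W : Submodule ℝ H) (hWV : W ≤ V)
    (nV nW : H → ℝ)
    (a : H →ₗ[ℝ] H →ₗ[ℝ] ℝ)
    (Ca CR CI C₁ C₂ : ℝ) (hCa : 0 ≤ Ca) (hCR : 0 ≤ CR) (hCI : 0 ≤ CI)
    (hC₁ : 0 ≤ C₁) (hC₂ : 0 ≤ C₂)
    (hnV : ∀ x, 0 ≤ nV x) (hnW : ∀ x, 0 ≤ nW x)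
    (habdd : ∀ x y, |a x y| ≤ Ca * nV x * nV y) :
    ∃ C : ℝ, ∀ (h : ℝ), 0 < h → ∀ (Vh : Submodule ℝ H), Vh ≤ V →
      ∀ u ∈ V, ∀ uh ∈ Vh,
      -- (i)+(ii)+(iv): regular solvability of the adjoint problem, interpolation,
      -- and consistency
      (∀ χ : H, ∃ w ∈ W, (∀ v ∈ V, a v w = ⟪χ, v⟫) ∧ nW w ≤ CR * ‖χ‖ ∧
        ∃ Iw ∈ Vh, nV (w - Iw) ≤ CI * h * nW w ∧
          |a uh Iw - a u Iw| ≤ C₂ * h ^ 2 * nW w) →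
      -- (iii): the H¹-type error estimate
      nV (u - uh) ≤ C₁ * h →
      ‖u - uh‖ ≤ C * h ^ 2 := by
  refine ⟨(Ca * C₁ * CI + C₂) * CR, ?_⟩
  intro h hh Vh hVhV u hu uh huh hadj hiii
  obtain ⟨w, hwW, hsol, hreg, Iw, hIw, hint, hcons⟩ := hadj (u - uh)
  have huv : u - uh ∈ V := V.sub_mem hu (hVhV huh)
  have key : ‖u - uh‖ ^ 2 = a (u - uh) w := by
    rw [hsol _ huv, real_inner_self_eq_norm_sq]
  have split : a (u - uh) w = a (u - uh) (w - Iw) + (a u Iw - a uh Iw) := by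
    simp only [map_sub, LinearMap.sub_apply]; ring
  have hb1 : a (u - uh) (w - Iw) ≤ Ca * (C₁ * h) * (CI * h * nW w) :=
    le_trans (le_abs_self _) <| le_trans (habdd _ _) <| by
      have h1 : Ca * nV (u - uh) ≤ Ca * (C₁ * h) := by
        exact mul_le_mul_of_nonneg_left hiii hCa
      calc Ca * nV (u - uh) * nV (w - Iw) ≤ Ca * (C₁ * h) * nV (w - Iw) :=
            mul_le_mul_of_nonneg_right h1 (hnV _)
        _ ≤ Ca * (C₁ * h) * (CI * h * nW w) := by
            apply mul_le_mul_of_nonneg_left hint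
            positivity
  have hb2 : a u Iw - a uh Iw ≤ C₂ * h ^ 2 * nW w := by
    have := abs_le.mp hcons
    linarith [this.1]
  have hsq : ‖u - uh‖ ^ 2 ≤ (Ca * C₁ * CI + C₂) * CR * h ^ 2 * ‖u - uh‖ := by
    have hw : nW w ≤ CR * ‖u - uh‖ := hreg
    have hnn : (0:ℝ) ≤ h := le_of_lt hh
    nlinarith [hnW w, norm_nonneg (u - uh), key, split, hb1, hb2,
      mul_le_mul_of_nonneg_left hw (mul_nonneg (mul_nonneg (mul_nonneg hCa hC₁) hCI) (mul_nonneg hnn hnn)),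
      mul_le_mul_of_nonneg_left hw (mul_nonneg hC₂ (mul_nonneg hnn hnn))]
  rcases eq_or_lt_of_le (norm_nonneg (u - uh)) with h0 | h0
  · rw [← h0]
    positivity
  · have := (mul_le_mul_iff_of_pos_right h0).mp (by nlinarith : ‖u - uh‖ * ‖u - uh‖ ≤ (Ca * C₁ * CI + C₂) * CR * h ^ 2 * ‖u - uh‖)
    exact this
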